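/- Let (Ω, μ) be a finite measure space and K ≥ 0. Let (u_n) and u be measurable functions on Ω with 0 ≤ u_n ≤ K and 0 ≤ u ≤ K a.e. Assume that for every g ∈ L¹(Ω × (0, ∞), μ ⊗ Lebesgue), ∫∫ 1_{ξ < u_n(x)} g(x, ξ) dξ dμ(x) → ∫∫ 1_{ξ < u(x)} g(x, ξ) dξ dμ(x) as n → ∞. Then ∫_Ω |u_n − u|² dμ → 0. -/

import Mathlib

open MeasureTheory Filter

lemma slice1 (K a : ℝ) (ha : 0 ≤ a) (haK : a ≤ K) :
    ∫ ξ in Set.Ioi (0:ℝ), (if ξ < a then (1:ℝ) else 0) * (if ξ < K+1 then (1:ℝ) else 0) = a := by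
  have heq : ∀ ξ : ℝ, (if ξ < a then (1:ℝ) else 0) * (if ξ < K+1 then (1:ℝ) else 0)
      = (Set.Iio a).indicator (fun _ => (1:ℝ)) ξ := by
    intro ξ
    by_cases h1 : ξ < a
    · have h2 : ξ < K + 1 := by linarith
      simp [h1, h2, Set.indicator_of_mem, Set.mem_Iio]
    · simp [h1, Set.indicator_of_notMem, Set.mem_Iio]
  simp only [heq]
  rw [setIntegral_indicator measurableSet_Iio, Set.Ioi_inter_Iio]
  simp [Real.volume_Ioo, ENNReal.toReal_ofReal ha, ha]

lemma slice2 (K a : ℝ) (ha : 0 ≤ a) (haK : a ≤ K) :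
    ∫ ξ in Set.Ioi (0:ℝ), (if ξ < a then (1:ℝ) else 0) * (if ξ < K+1 then 2*ξ else 0) = a^2 := by
  have heq : ∀ ξ : ℝ, (if ξ < a then (1:ℝ) else 0) * (if ξ < K+1 then 2*ξ else 0)
      = (Set.Iio a).indicator (fun ξ => 2*ξ) ξ := by
    intro ξ
    by_cases h1 : ξ < a
    · have h2 : ξ < K + 1 := by linarith
      simp [h1, h2, Set.indicator_of_mem, Set.mem_Iio]
    · simp [h1, Set.indicator_of_notMem, Set.mem_Iio]
  simp only [heq]
  rw [setIntegral_indicator measurableSet_Iio, Set.Ioi_inter_Iio]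
  rw [← integral_Ioc_eq_integral_Ioo, ← intervalIntegral.integral_of_le ha]
  rw [intervalIntegral.integral_const_mul]
  simp [integral_id]
  ring

lemma phiInt (K : ℝ) (f : ℝ → ℝ) (hf : Continuous f) :
    Integrable (fun ξ => if ξ < K+1 then f ξ else 0) (volume.restrict (Set.Ioi (0:ℝ))) := by
  have heq : (fun ξ => if ξ < K+1 then f ξ else 0)
      = (Set.Iio (K+1)).indicator f := by
    ext ξ; by_cases h : ξ < K+1 <;> simp [h, Set.indicator, Set.mem_Iio]
  rw [heq, integrable_indicator_iff measurableSet_Iio]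
  have hIcc : IntegrableOn f (Set.Icc 0 (K+1)) volume :=
    hf.continuousOn.integrableOn_compact isCompact_Icc
  unfold IntegrableOn
  rw [Measure.restrict_restrict measurableSet_Iio]
  exact hIcc.mono_set (fun x hx => ⟨le_of_lt hx.2, le_of_lt hx.1⟩)

lemma gInt {Ω : Type*} [MeasurableSpace Ω] (μ : Measure Ω) [IsFiniteMeasure μ]
    (φ : ℝ → ℝ) (hφ : Integrable φ (volume.restrict (Set.Ioi (0:ℝ))))
    (h : Ω → ℝ) (hh : Measurable h) (C : ℝ) (hhb : ∀ᵐ x ∂μ, |h x| ≤ C) :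
    Integrable (fun p : Ω × ℝ => h p.1 * φ p.2)
      (μ.prod (volume.restrict (Set.Ioi (0:ℝ)))) := by
  have hhint : Integrable h μ :=
    (integrable_const C).mono' hh.aestronglyMeasurable (hhb.mono fun x hx => by simpa using hx)
  exact hhint.mul_prod hφ

lemma keyInt {Ω : Type*} [MeasurableSpace Ω] (μ : Measure Ω) [IsFiniteMeasure μ]
    (K : ℝ) (v : Ω → ℝ) (hv : Measurable v) (hvb : ∀ᵐ x ∂μ, 0 ≤ v x ∧ v x ≤ K)
    (φ : ℝ → ℝ) (hφm : Measurable φ) (hφ : Integrable φ (volume.restrict (Set.Ioi (0:ℝ))))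
    (h : Ω → ℝ) (hh : Measurable h) (C : ℝ) (hhb : ∀ᵐ x ∂μ, |h x| ≤ C)
    (F : ℝ → ℝ)
    (hF : ∀ a, 0 ≤ a → a ≤ K →
      (∫ ξ in Set.Ioi (0:ℝ), (if ξ < a then (1:ℝ) else 0) * φ ξ) = F a) :
    (∫ p, (if p.2 < v p.1 then (1:ℝ) else 0) * (h p.1 * φ p.2)
      ∂(μ.prod (volume.restrict (Set.Ioi (0:ℝ))))) = ∫ x, F (v x) * h x ∂μ := by
  set ν := volume.restrict (Set.Ioi (0:ℝ))
  have hg : Integrable (fun p : Ω × ℝ => h p.1 * φ p.2) (μ.prod ν) :=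
    gInt μ φ hφ h hh C hhb
  have hsm : MeasurableSet {p : Ω × ℝ | p.2 < v p.1} :=
    measurableSet_lt measurable_snd (hv.comp measurable_fst)
  have hmeas : Measurable (fun p : Ω × ℝ =>
      (if p.2 < v p.1 then (1:ℝ) else 0) * (h p.1 * φ p.2)) := by
    exact ((Measurable.ite hsm measurable_const measurable_const).mul
      ((hh.comp measurable_fst).mul (hφm.comp measurable_snd)))
  have hf : Integrable (fun p : Ω × ℝ =>
      (if p.2 < v p.1 then (1:ℝ) else 0) * (h p.1 * φ p.2)) (μ.prod ν) := by
    refine hg.mono hmeas.aestronglyMeasurable (Filter.Eventually.of_forall fun p => ?_)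
    by_cases hp : p.2 < v p.1 <;> simp [hp, abs_mul]
    positivity
  rw [integral_prod _ hf]
  refine integral_congr_ae ?_
  filter_upwards [hvb] with x hx
  have : (∫ ξ, (if ξ < v x then (1:ℝ) else 0) * (h x * φ ξ) ∂ν)
      = (∫ ξ, ((if ξ < v x then (1:ℝ) else 0) * φ ξ) * h x ∂ν) := by
    congr 1; ext ξ; ring
  rw [this, integral_mul_const, hF (v x) hx.1 hx.2]

/-- If the kinetic functions `1_{ξ<u_n(x)}` converge weakly-* in `L^∞(Ω × (0,∞))` to the
kinetic function `1_{ξ<u(x)}`, with `0 ≤ u_n, u ≤ K` a.e. on a finite measure space, then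
`u_n → u` strongly in `L²(μ)`. -/
theorem stmt17 {Ω : Type*} [MeasurableSpace Ω] (μ : Measure Ω) [IsFiniteMeasure μ]
    (K : ℝ) (hK : 0 ≤ K)
    (un : ℕ → Ω → ℝ) (hun_meas : ∀ n, Measurable (un n))
    (hun_bd : ∀ n, ∀ᵐ x ∂μ, 0 ≤ un n x ∧ un n x ≤ K)
    (u : Ω → ℝ) (hu_meas : Measurable u) (hu_bd : ∀ᵐ x ∂μ, 0 ≤ u x ∧ u x ≤ K)
    (hconv : ∀ g : Ω × ℝ → ℝ,
      Integrable g (μ.prod (volume.restrict (Set.Ioi (0 : ℝ)))) →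
      Tendsto
        (fun n => ∫ p, (if p.2 < un n p.1 then (1 : ℝ) else 0) * g p
          ∂(μ.prod (volume.restrict (Set.Ioi (0 : ℝ)))))
        atTop
        (nhds (∫ p, (if p.2 < u p.1 then (1 : ℝ) else 0) * g p
          ∂(μ.prod (volume.restrict (Set.Ioi (0 : ℝ))))))) :
    Tendsto (fun n => ∫ x, |un n x - u x| ^ 2 ∂μ) atTop (nhds 0) := by
  set ν := volume.restrict (Set.Ioi (0:ℝ)) with hν
  -- the two test profiles in ξ
  set φ₁ : ℝ → ℝ := fun ξ => if ξ < K+1 then (1:ℝ) else 0 with hφ₁def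
  set φ₂ : ℝ → ℝ := fun ξ => if ξ < K+1 then 2*ξ else 0 with hφ₂def
  have hφ₁m : Measurable φ₁ := Measurable.ite measurableSet_Iio measurable_const measurable_const
  have hφ₂m : Measurable φ₂ :=
    Measurable.ite measurableSet_Iio (measurable_const.mul measurable_id) measurable_const
  have hφ₁i : Integrable φ₁ ν := phiInt K (fun _ => 1) continuous_const
  have hφ₂i : Integrable φ₂ ν := phiInt K (fun ξ => 2*ξ) (by continuity)
  have hub : ∀ᵐ x ∂μ, |u x| ≤ K := hu_bd.mono fun x hx => by rw [abs_of_nonneg hx.1]; exact hx.2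
  have h1b : ∀ᵐ x ∂μ, |(1:ℝ)| ≤ (1:ℝ) := Filter.Eventually.of_forall (by simp)
  -- Limit of ∫ (un n)² : test against g(x,ξ) = 1 · φ₂(ξ)
  have hA : Tendsto (fun n => ∫ x, (un n x)^2 ∂μ) atTop (nhds (∫ x, (u x)^2 ∂μ)) := by
    have := hconv (fun p => (1:ℝ) * φ₂ p.2) (gInt μ φ₂ hφ₂i (fun _ => 1) measurable_const 1 h1b)
    have e1 : ∀ v : Ω → ℝ, Measurable v → (∀ᵐ x ∂μ, 0 ≤ v x ∧ v x ≤ K) →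
        (∫ p, (if p.2 < v p.1 then (1:ℝ) else 0) * ((1:ℝ) * φ₂ p.2) ∂(μ.prod ν))
          = ∫ x, (v x)^2 ∂μ := by
      intro v hv hvb
      have := keyInt μ K v hv hvb φ₂ hφ₂m hφ₂i (fun _ => 1) measurable_const 1 h1b
        (fun a => a^2) (fun a ha haK => slice2 K a ha haK)
      simpa using this
    rw [e1 u hu_meas hu_bd] at this
    refine this.congr fun n => e1 (un n) (hun_meas n) (hun_bd n)
  -- Limit of ∫ un n · u : test against g(x,ξ) = u(x) · φ₁(ξ)
  have hB : Tendsto (fun n => ∫ x, un n x * u x ∂μ) atTop (nhds (∫ x, u x * u x ∂μ)) := by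
    have := hconv (fun p => u p.1 * φ₁ p.2) (gInt μ φ₁ hφ₁i u hu_meas K hub)
    have e1 : ∀ v : Ω → ℝ, Measurable v → (∀ᵐ x ∂μ, 0 ≤ v x ∧ v x ≤ K) →
        (∫ p, (if p.2 < v p.1 then (1:ℝ) else 0) * (u p.1 * φ₁ p.2) ∂(μ.prod ν))
          = ∫ x, v x * u x ∂μ := by
      intro v hv hvb
      exact keyInt μ K v hv hvb φ₁ hφ₁m hφ₁i u hu_meas K hub
        (fun a => a) (fun a ha haK => slice1 K a ha haK)
    rw [e1 u hu_meas hu_bd] at this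
    refine this.congr fun n => e1 (un n) (hun_meas n) (hun_bd n)
  -- integrability of the quadratic terms
  have hIntu2 : Integrable (fun x => (u x)^2) μ := by
    refine (integrable_const (K^2)).mono' (hu_meas.pow_const 2).aestronglyMeasurable ?_
    filter_upwards [hu_bd] with x hx
    simp only [Real.norm_eq_abs, abs_pow, abs_of_nonneg hx.1]
    exact pow_le_pow_left₀ hx.1 hx.2 2
  have hInt2 : ∀ n, Integrable (fun x => (un n x)^2) μ := by
    intro n
    refine (integrable_const (K^2)).mono' ((hun_meas n).pow_const 2).aestronglyMeasurable ?_
    filter_upwards [hun_bd n] with x hx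
    simp only [Real.norm_eq_abs, abs_pow, abs_of_nonneg hx.1]
    exact pow_le_pow_left₀ hx.1 hx.2 2
  have hIntB : ∀ n, Integrable (fun x => un n x * u x) μ := by
    intro n
    refine (integrable_const (K*K)).mono' ((hun_meas n).mul hu_meas).aestronglyMeasurable ?_
    filter_upwards [hun_bd n, hu_bd] with x hx hx'
    simp only [Real.norm_eq_abs, abs_mul, abs_of_nonneg hx.1, abs_of_nonneg hx'.1]
    exact mul_le_mul hx.2 hx'.2 hx'.1 hK
  -- expand the square
  have heq : ∀ n, ∫ x, |un n x - u x| ^ 2 ∂μ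
      = (∫ x, (un n x)^2 ∂μ) - 2*(∫ x, un n x * u x ∂μ) + ∫ x, (u x)^2 ∂μ := by
    intro n
    have hfe : (fun x => |un n x - u x| ^ 2)
        = fun x => ((un n x)^2 - 2*(un n x * u x)) + (u x)^2 := by
      funext x; rw [sq_abs]; ring
    have h2' : Integrable (fun x => 2*(un n x * u x)) μ := (hIntB n).const_mul 2
    have h12 : Integrable (fun x => un n x ^ 2 - 2*(un n x * u x)) μ := (hInt2 n).sub h2'
    rw [hfe, integral_add h12 hIntu2, integral_sub (hInt2 n) h2', integral_const_mul]
  have hBB : (∫ x, u x * u x ∂μ) = ∫ x, (u x)^2 ∂μ := by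
    refine integral_congr_ae (Filter.Eventually.of_forall fun x => ?_); ring
  have hlim : Tendsto (fun n => (∫ x, (un n x)^2 ∂μ) - 2*(∫ x, un n x * u x ∂μ)
      + ∫ x, (u x)^2 ∂μ) atTop
      (nhds ((∫ x, (u x)^2 ∂μ) - 2*(∫ x, u x * u x ∂μ) + ∫ x, (u x)^2 ∂μ)) :=
    (hA.sub (hB.const_mul 2)).add tendsto_const_nhds
  have hzero : (∫ x, (u x)^2 ∂μ) - 2*(∫ x, u x * u x ∂μ) + ∫ x, (u x)^2 ∂μ = 0 := by
    rw [hBB]; ring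
  rw [hzero] at hlim
  exact hlim.congr fun n => (heq n).symm
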